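/- Let A be a Galois ring GR(p^n, r) and B a Galois ring GR(p^n, r'). Then there exists an injective ring homomorphism from A into B if and only if r divides r'. -/

import Mathlib

set_option maxHeartbeats 1000000

open IsLocalRing Polynomial

section Auxiliary

/-- A ring in which some power of an ideal vanishes is adically complete for it. -/
lemma aux_adic_complete_of_nilpotent {R : Type*} [CommRing R] (I : Ideal R) (N : ℕ)
    (hN : I ^ N = ⊥) : IsAdicComplete I R where
  haus' := by
    intro x hx
    have := hx N
    rw [SModEq.zero, hN, Ideal.smul_top_eq_map, Ideal.map_bot] at this
    simpa using this
  prec' := by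
    intro f hf
    refine ⟨f N, fun n => ?_⟩
    rcases le_total n N with h | h
    · exact hf h
    · have h2 := hf h
      rw [SModEq.sub_mem, hN, Ideal.smul_top_eq_map, Ideal.map_bot] at h2
      simp only [Submodule.restrictScalars_mem, Submodule.mem_bot, sub_eq_zero] at h2
      rw [h2]

lemma aux_separable_deriv_ne {K : Type*} [Field K] {f : K[X]} (hs : f.Separable) {x : K}
    (hx : Polynomial.eval x f = 0) : Polynomial.eval x (Polynomial.derivative f) ≠ 0 := by
  obtain ⟨u, v, huv⟩ := hs
  intro h0
  have := congrArg (Polynomial.eval x) huv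
  simp [hx, h0] at this

/-- Hensel lifting of roots of integer polynomials from the residue field. -/
lemma aux_hensel_root {R : Type} [CommRing R] [IsLocalRing R]
    [HenselianRing R (IsLocalRing.maximalIdeal R)]
    (M : Polynomial ℤ) (hM : M.Monic) (x₀ : IsLocalRing.ResidueField R)
    (h1 : Polynomial.eval x₀ (M.map (Int.castRingHom (IsLocalRing.ResidueField R))) = 0)
    (h2 : Polynomial.eval x₀
      (Polynomial.derivative (M.map (Int.castRingHom (IsLocalRing.ResidueField R)))) ≠ 0) :
    ∃ a : R, Polynomial.eval a (M.map (Int.castRingHom R)) = 0 ∧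
      IsLocalRing.residue R a = x₀ := by
  obtain ⟨a₀, ha₀⟩ := Ideal.Quotient.mk_surjective (I := IsLocalRing.maximalIdeal R) x₀
  have hres : ∀ (N : Polynomial ℤ) (a : R),
      IsLocalRing.residue R (Polynomial.eval a (N.map (Int.castRingHom R))) =
      Polynomial.eval (IsLocalRing.residue R a)
        (N.map (Int.castRingHom (IsLocalRing.ResidueField R))) := by
    intro N a
    rw [Polynomial.eval_map, Polynomial.eval_map, Polynomial.hom_eval₂]
    congr 1
  have key := HenselianRing.is_henselian (R := R) (I := IsLocalRing.maximalIdeal R)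
    (M.map (Int.castRingHom R)) (hM.map _) a₀ ?_ ?_
  · obtain ⟨a, ha, hd⟩ := key
    refine ⟨a, ha, ?_⟩
    have : IsLocalRing.residue R (a - a₀) = 0 := Ideal.Quotient.eq_zero_iff_mem.mpr hd
    rw [map_sub, sub_eq_zero] at this
    rw [this]; exact ha₀
  · rw [← Ideal.Quotient.eq_zero_iff_mem]
    show IsLocalRing.residue R _ = 0
    rw [hres M a₀, show IsLocalRing.residue R a₀ = x₀ from ha₀, h1]
  · show IsUnit (IsLocalRing.residue R _)
    rw [isUnit_iff_ne_zero, Polynomial.derivative_map, hres (Polynomial.derivative M) a₀,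
      show IsLocalRing.residue R a₀ = x₀ from ha₀, ← Polynomial.derivative_map]
    exact h2

lemma aux_card_ker_mul_card_range {G H : Type*} [AddGroup G] [AddCommGroup H] (f : G →+ H) :
    Nat.card G = Nat.card f.ker * Nat.card f.range := by
  rw [AddSubgroup.card_eq_card_quotient_mul_card_addSubgroup f.ker, mul_comm,
    Nat.card_congr (QuotientAddGroup.quotientKerEquivRange f).toEquiv]

lemma aux_charP_residue_p {p : ℕ} (hp : p.Prime) {A : Type} [CommRing A] [IsLocalRing A]
    (hmax : IsLocalRing.maximalIdeal A = Ideal.span {(p : A)}) :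
    CharP (IsLocalRing.ResidueField A) p := by
  have h0 : ((p : ℕ) : IsLocalRing.ResidueField A) = 0 := by
    have hm : (p : A) ∈ IsLocalRing.maximalIdeal A := by
      rw [hmax]; exact Ideal.mem_span_singleton_self _
    have := Ideal.Quotient.eq_zero_iff_mem.mpr hm
    rwa [show Ideal.Quotient.mk (IsLocalRing.maximalIdeal A) ((p : ℕ) : A)
        = ((p : ℕ) : IsLocalRing.ResidueField A) from map_natCast _ p] at this
  have hd : ringChar (IsLocalRing.ResidueField A) ∣ p := ringChar.dvd h0
  rcases hp.eq_one_or_self_of_dvd _ hd with h | h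
  · exfalso
    haveI := ringChar.charP (IsLocalRing.ResidueField A)
    have h1 : ((ringChar (IsLocalRing.ResidueField A) : ℕ) : IsLocalRing.ResidueField A) = 0 :=
      CharP.cast_eq_zero _ _
    rw [h] at h1
    simp at h1
  · exact h ▸ ringChar.charP _

lemma aux_finite_field_card_pow {K L : Type} [Field K] [Field L] [Finite K] [Finite L]
    (g : K →+* L) : ∃ d, 0 < d ∧ Nat.card L = Nat.card K ^ d := by
  letI : Algebra K L := g.toAlgebra
  haveI : FiniteDimensional K L := Module.Finite.of_finite
  haveI : Fintype K := Fintype.ofFinite K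
  haveI : Fintype L := Fintype.ofFinite L
  refine ⟨Module.finrank K L, Module.finrank_pos, ?_⟩
  have := Module.card_fintype (Module.finBasis K L)
  simp only [Fintype.card_fin] at this
  simp [Nat.card_eq_fintype_card, this]

/-- A generator of a finite field, together with the properties of its minimal polynomial. -/
lemma aux_field_gen {p s : ℕ} (hp : p.Prime) {k : Type} [Field k] [Finite k]
    [Algebra (ZMod p) k] (hcard : Nat.card k = p ^ s) :
    ∃ x : k, Subring.closure {x} = ⊤ ∧
      (minpoly (ZMod p) x).Monic ∧
      (minpoly (ZMod p) x).natDegree = s ∧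
      (minpoly (ZMod p) x).Separable ∧
      minpoly (ZMod p) x ∣ (Polynomial.X ^ (p ^ s - 1) - 1) ∧
      Polynomial.aeval x (minpoly (ZMod p) x) = 0 := by
  haveI := Fact.mk hp
  haveI : Fintype k := Fintype.ofFinite k
  have hcard' : Fintype.card k = p ^ s := by rwa [← Nat.card_eq_fintype_card]
  haveI : Module.Finite (ZMod p) k := Module.Finite.of_finite
  obtain ⟨g, hg⟩ := IsCyclic.exists_generator (α := kˣ)
  set x : k := (g : k) with hx
  have hxne : x ≠ 0 := g.ne_zero
  have hint : IsIntegral (ZMod p) x := IsIntegral.of_finite (ZMod p) x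
  have hclos : Subring.closure {x} = ⊤ := by
    rw [eq_top_iff]
    intro y _
    rcases eq_or_ne y 0 with rfl | hy
    · exact Subring.zero_mem _
    · obtain ⟨v, hv⟩ := isUnit_iff_ne_zero.mpr hy
      have hv' : v ∈ Subgroup.zpowers g := hg v
      obtain ⟨m, hm⟩ := (isOfFinOrder_of_finite g).mem_powers_iff_mem_zpowers.mpr hv'
      have hy2 : y = x ^ m := by
        rw [← hv, ← hm]; push_cast; rfl
      have hxmem : x ∈ Subring.closure {x} := Subring.subset_closure (Set.mem_singleton _)
      rw [hy2]
      exact Subring.pow_mem _ hxmem m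
  have hfr : Module.finrank (ZMod p) k = s := by
    have hc := Module.card_fintype (Module.finBasis (ZMod p) k)
    rw [Fintype.card_fin, ZMod.card, hcard'] at hc
    exact Nat.pow_right_injective hp.two_le hc.symm
  have hdeg : (minpoly (ZMod p) x).natDegree = s := by
    have hadj : IntermediateField.adjoin (ZMod p) {x} = ⊤ := by
      rw [eq_top_iff]
      intro y _
      have hy : y ∈ Subring.closure {x} := by rw [hclos]; trivial
      have hle : Subring.closure {x} ≤ (IntermediateField.adjoin (ZMod p) {x}).toSubring :=
        Subring.closure_le.mpr (by
          simp only [Set.singleton_subset_iff]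
          exact IntermediateField.subset_adjoin (ZMod p) {x} (Set.mem_singleton _))
      exact hle hy
    have := IntermediateField.adjoin.finrank hint
    rw [hadj, IntermediateField.finrank_top', hfr] at this
    exact this.symm
  have hdvd : minpoly (ZMod p) x ∣ (Polynomial.X ^ (p ^ s - 1) - 1) := by
    apply minpoly.dvd
    rw [map_sub, map_pow, Polynomial.aeval_X, map_one, sub_eq_zero]
    rw [← hcard']
    exact FiniteField.pow_card_sub_one_eq_one x hxne
  exact ⟨x, hclos, minpoly.monic hint, hdeg,
    PerfectField.separable_of_irreducible (minpoly.irreducible hint), hdvd,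
    minpoly.aeval _ _⟩

end Auxiliary

section LocalStructure

variable {p n : ℕ} (hp : p.Prime) (hn : 0 < n)
variable {A : Type} [CommRing A] [IsLocalRing A]
variable (hchar : CharP A (p ^ n)) (hmax : IsLocalRing.maximalIdeal A = Ideal.span {(p : A)})

include hn hchar hmax in
lemma aux_unit_decomp : ∀ a : A, a ≠ 0 → ∃ i < n, ∃ u : Aˣ, a = (p : A) ^ i * u := by
  intro a ha
  have hpn : (p : A) ^ n = 0 := by
    have := CharP.cast_eq_zero A (p ^ n)
    rwa [Nat.cast_pow] at this
  have hex : ∃ i, ¬ (p : A) ^ i ∣ a := ⟨n, by rw [hpn]; simpa [zero_dvd_iff] using ha⟩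
  classical
  obtain ⟨i, hspec, hmin⟩ : ∃ i, (¬ (p : A) ^ i ∣ a) ∧ ∀ j, j < i → (p : A) ^ j ∣ a :=
    ⟨Nat.find hex, Nat.find_spec hex, fun j hj => not_not.mp (Nat.find_min hex hj)⟩
  have hipos : 0 < i := by
    rcases Nat.eq_zero_or_pos i with h | h
    · exfalso; rw [h] at hspec; simp at hspec
    · exact h
  have hile : i ≤ n := by
    by_contra hcon
    have := hmin n (by omega)
    rw [hpn] at this
    exact ha (zero_dvd_iff.mp this)
  obtain ⟨b, hb⟩ := hmin (i - 1) (by omega)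
  have hnd : ¬ (p : A) ∣ b := by
    rintro ⟨c, hc⟩
    refine hspec ⟨c, ?_⟩
    rw [hb, hc, ← mul_assoc, ← pow_succ, Nat.sub_add_cancel hipos]
  have hbu : IsUnit b := by
    by_contra hbu
    have : b ∈ maximalIdeal A := hbu
    rw [hmax, Ideal.mem_span_singleton] at this
    exact hnd this
  obtain ⟨u, hu⟩ := hbu
  exact ⟨i - 1, by omega, u, by rw [hb, hu]⟩

include hp hn hchar hmax in
lemma aux_hom_injective {B : Type} [CommRing B] (hcharB : CharP B (p ^ n)) (f : A →+* B) :
    Function.Injective f := by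
  rw [injective_iff_map_eq_zero]
  intro a hfa
  by_contra ha
  obtain ⟨i, hi, u, rfl⟩ := aux_unit_decomp hn hchar hmax a ha
  rw [map_mul, map_pow, map_natCast] at hfa
  have h0 : (p : B) ^ i = 0 := (Units.mul_left_eq_zero (Units.map f.toMonoidHom u)).mp hfa
  have hdvd : (p : ℕ) ^ n ∣ p ^ i :=
    (CharP.cast_eq_zero_iff B (p ^ n) (p ^ i)).mp (by push_cast; exact h0)
  have := (Nat.pow_dvd_pow_iff_le_right hp.one_lt).mp hdvd
  omega

include hmax in
lemma aux_closure_eq_top (hpn : (p : A) ^ n = 0) (α : A)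
    (hgen : Subring.closure {IsLocalRing.residue A α} = ⊤) : Subring.closure {α} = ⊤ := by
  set S := Subring.closure {α} with hS
  have hmapS : ∀ b : A, ∃ t ∈ S, IsLocalRing.residue A t = IsLocalRing.residue A b := by
    intro b
    have h1 : Subring.closure {IsLocalRing.residue A α} ≤ S.map (IsLocalRing.residue A) :=
      Subring.closure_le.mpr (by
        simp only [Set.singleton_subset_iff]
        exact ⟨α, Subring.subset_closure rfl, rfl⟩)
    have h2 : IsLocalRing.residue A b ∈ S.map (IsLocalRing.residue A) :=
      h1 (by rw [hgen]; trivial)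
    obtain ⟨t, ht, hteq⟩ := h2
    exact ⟨t, ht, hteq⟩
  have key : ∀ (m : ℕ) (a : A), ∃ s ∈ S, (p : A) ^ m ∣ (a - s) := by
    intro m
    induction m with
    | zero => exact fun a => ⟨0, S.zero_mem, by simpa using dvd_refl _⟩
    | succ m ih =>
      intro a
      obtain ⟨s, hs, b, hb⟩ := ih a
      obtain ⟨t, ht, hteq⟩ := hmapS b
      have hmem : b - t ∈ IsLocalRing.maximalIdeal A := by
        rw [← Ideal.Quotient.eq_zero_iff_mem]
        show IsLocalRing.residue A (b - t) = 0
        rw [map_sub, hteq, sub_self]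
      rw [hmax, Ideal.mem_span_singleton] at hmem
      obtain ⟨c, hc⟩ := hmem
      refine ⟨s + (p : A) ^ m * t,
        S.add_mem hs (S.mul_mem (S.pow_mem (natCast_mem S p) m) ht), c, ?_⟩
      have heq : a - (s + (p:A)^m * t) = (p:A)^m * (b - t) := by
        rw [show a - (s + (p:A)^m * t) = (a - s) - (p:A)^m * t by ring, hb, mul_sub]
      rw [heq, hc, pow_succ]; ring
  rw [eq_top_iff]
  intro a _
  obtain ⟨s, hs, b, hb⟩ := key n a
  rw [hpn, zero_mul] at hb
  rw [sub_eq_zero] at hb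
  exact hb ▸ hs

include hp hn hchar hmax in
lemma aux_card_eq_pow [Fintype A] {r : ℕ}
    (hres : Nat.card (IsLocalRing.ResidueField A) = p ^ r) :
    Nat.card A = p ^ (n * r) := by
  have unit_dec := aux_unit_decomp hn hchar hmax
  have hpn : (p : A) ^ n = 0 := by
    have := CharP.cast_eq_zero A (p ^ n); rwa [Nat.cast_pow] at this
  set f : ℕ → A →+ A := fun i => AddMonoidHom.mulLeft ((p : A) ^ i) with hf
  set Rg : ℕ → AddSubgroup A := fun i => (f i).range with hRg
  have hmemR : ∀ i x, x ∈ Rg i ↔ ∃ b, (p : A) ^ i * b = x := by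
    intro i x; rfl
  have hK1 : (f 1).ker = Rg (n - 1) := by
    ext a
    rw [AddMonoidHom.mem_ker, hmemR]
    constructor
    · intro ha
      have ha' : (p : A) * a = 0 := by simpa [hf] using ha
      rcases eq_or_ne a 0 with rfl | h
      · exact ⟨0, by simp⟩
      · obtain ⟨j, hj, u, rfl⟩ := unit_dec a h
        have h0 : (p : A) ^ (1 + j) * u = 0 := by
          rw [pow_add, pow_one, mul_assoc]; exact ha'
        have h1 : (p : A) ^ (1 + j) = 0 := (Units.mul_left_eq_zero u).mp h0
        have h2 : (p : ℕ) ^ n ∣ p ^ (1 + j) :=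
          (CharP.cast_eq_zero_iff A (p ^ n) (p ^ (1 + j))).mp (by push_cast; exact h1)
        have h3 : n ≤ 1 + j := (Nat.pow_dvd_pow_iff_le_right hp.one_lt).mp h2
        refine ⟨(p : A) ^ (j - (n - 1)) * u, ?_⟩
        rw [← mul_assoc, ← pow_add]
        congr 2
        omega
    · rintro ⟨b, rfl⟩
      show (p : A) ^ 1 * ((p : A) ^ (n - 1) * b) = 0
      rw [← mul_assoc, ← pow_add]
      have : 1 + (n - 1) = n := by omega
      rw [this, hpn, zero_mul]
  have hres1 : Nat.card A = p ^ r * Nat.card (Rg 1) := by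
    set g : A →+ IsLocalRing.ResidueField A :=
      AddMonoidHom.mk' (IsLocalRing.residue A) (map_add _) with hg
    have hcard := aux_card_ker_mul_card_range g
    have hkg : g.ker = Rg 1 := by
      ext a
      rw [AddMonoidHom.mem_ker, hmemR]
      have : g a = 0 ↔ a ∈ IsLocalRing.maximalIdeal A := Ideal.Quotient.eq_zero_iff_mem
      rw [this, hmax, Ideal.mem_span_singleton]
      constructor
      · rintro ⟨c, rfl⟩; exact ⟨c, by rw [pow_one]⟩
      · rintro ⟨b, rfl⟩; exact ⟨b, by rw [pow_one]⟩
    have hrg : Nat.card g.range = p ^ r := by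
      have hsurj : Function.Surjective g := Ideal.Quotient.mk_surjective
      rw [← hres]
      have : g.range = ⊤ := AddMonoidHom.range_eq_top.mpr hsurj
      rw [this]
      exact Nat.card_congr AddSubgroup.topEquiv.toEquiv
    rw [hcard, hkg, hrg, mul_comm]
  have hRn1 : Nat.card (Rg (n - 1)) = p ^ r := by
    have h1 := aux_card_ker_mul_card_range (f 1)
    rw [hK1] at h1
    have hpos : 0 < Nat.card (Rg 1) := Nat.card_pos
    have := hres1.symm.trans h1
    exact Nat.eq_of_mul_eq_mul_right hpos this |>.symm
  have hstep : ∀ i, i + 1 ≤ n → Nat.card (Rg i) = p ^ r * Nat.card (Rg (i + 1)) := by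
    intro i hi
    set μ : Rg i →+ A := (f 1).comp (Rg i).subtype with hμ
    have hle : Rg (n - 1) ≤ Rg i := by
      intro x hx
      rw [hmemR] at hx ⊢
      obtain ⟨b, rfl⟩ := hx
      exact ⟨(p : A) ^ (n - 1 - i) * b, by rw [← mul_assoc, ← pow_add]; congr 2; omega⟩
    have hker : μ.ker = (Rg (n - 1)).addSubgroupOf (Rg i) := by
      ext y
      rw [AddMonoidHom.mem_ker, AddSubgroup.mem_addSubgroupOf]
      have : μ y = (f 1) (y : A) := rfl
      rw [this, ← hK1, AddMonoidHom.mem_ker]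
    have hrange : μ.range = Rg (i + 1) := by
      ext x
      rw [AddMonoidHom.mem_range, hmemR]
      constructor
      · rintro ⟨⟨y, hy⟩, rfl⟩
        rw [hmemR] at hy
        obtain ⟨b, rfl⟩ := hy
        refine ⟨b, ?_⟩
        show (p : A) ^ (i + 1) * b = (p : A) ^ 1 * ((p : A) ^ i * b)
        rw [← mul_assoc, ← pow_add, add_comm]
      · rintro ⟨b, rfl⟩
        refine ⟨⟨(p : A) ^ i * b, (hmemR i _).mpr ⟨b, rfl⟩⟩, ?_⟩
        show (p : A) ^ 1 * ((p : A) ^ i * b) = (p : A) ^ (i + 1) * b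
        rw [← mul_assoc, ← pow_add, add_comm]
    have hcard := aux_card_ker_mul_card_range μ
    rw [hker, hrange] at hcard
    rw [hcard, Nat.card_congr (AddSubgroup.addSubgroupOfEquivOfLe hle).toEquiv, hRn1]
  have hind : ∀ j, j ≤ n → Nat.card (Rg (n - j)) = p ^ (j * r) := by
    intro j
    induction j with
    | zero =>
      intro _
      have : Rg (n - 0) = ⊥ := by
        rw [eq_bot_iff]
        intro x hx
        rw [hmemR] at hx
        obtain ⟨b, rfl⟩ := hx
        simp only [Nat.sub_zero, hpn, zero_mul]
        rfl
      rw [this]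
      simp
    | succ j ih =>
      intro hj
      have h1 : n - (j + 1) + 1 = n - j := by omega
      have := hstep (n - (j + 1)) (by omega)
      rw [h1, ih (by omega)] at this
      rw [this, ← pow_add]
      congr 1
      ring
  have hR0 : Rg 0 = ⊤ := by
    rw [eq_top_iff]
    intro x _
    rw [hmemR]
    exact ⟨x, by rw [pow_zero, one_mul]⟩
  have := hind n le_rfl
  rw [Nat.sub_self, hR0] at this
  rw [← this, Nat.card_congr AddSubgroup.topEquiv.toEquiv]

include hn hchar hmax in
lemma aux_henselian : HenselianRing A (IsLocalRing.maximalIdeal A) := by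
  have hpn : (p : A) ^ n = 0 := by
    have := CharP.cast_eq_zero A (p ^ n)
    rwa [Nat.cast_pow] at this
  have hnil : (IsLocalRing.maximalIdeal A) ^ n = ⊥ := by
    rw [hmax, Ideal.span_singleton_pow, Ideal.span_singleton_eq_bot]
    exact hpn
  haveI := aux_adic_complete_of_nilpotent (IsLocalRing.maximalIdeal A) n hnil
  infer_instance

end LocalStructure

section RootInB

variable {p n r r' : ℕ}

/-- Finding a root in `B` of the lifted minimal polynomial. -/
lemma aux_exists_root_B (hp : p.Prime) (hn : 0 < n) (hr : 0 < r) (hr' : 0 < r')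
    (hdvd : r ∣ r') {B : Type} [CommRing B] [Fintype B] [IsLocalRing B]
    (hcharB : CharP B (p ^ n)) (hmaxB : IsLocalRing.maximalIdeal B = Ideal.span {(p : B)})
    (hresB : Nat.card (IsLocalRing.ResidueField B) = p ^ r')
    (M : Polynomial ℤ) (hM : M.Monic) (hMdeg : 0 < M.natDegree)
    (hsep : (M.map (Int.castRingHom (ZMod p))).Separable)
    (hdvd2 : (M.map (Int.castRingHom (ZMod p))) ∣ (Polynomial.X ^ (p ^ r - 1) - 1)) :
    ∃ β : B, Polynomial.eval β (M.map (Int.castRingHom B)) = 0 := by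
  haveI := Fact.mk hp
  haveI : Finite (IsLocalRing.ResidueField B) :=
    Finite.of_surjective _ (Ideal.Quotient.mk_surjective (I := IsLocalRing.maximalIdeal B))
  haveI : CharP (IsLocalRing.ResidueField B) p := aux_charP_residue_p hp hmaxB
  letI : Algebra (ZMod p) (IsLocalRing.ResidueField B) := ZMod.algebra _ p
  haveI : Fintype (IsLocalRing.ResidueField B) := Fintype.ofFinite _
  set kB := IsLocalRing.ResidueField B with hkB
  have hq' : Fintype.card kB = p ^ r' := by rwa [← Nat.card_eq_fintype_card]
  set fB := M.map (Int.castRingHom kB) with hfBdef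
  have hfB : fB = (M.map (Int.castRingHom (ZMod p))).map (algebraMap (ZMod p) kB) := by
    show M.map (Int.castRingHom kB) = _
    rw [Polynomial.map_map]
    congr 1
    exact Subsingleton.elim _ _
  have hsepB : fB.Separable := by rw [hfB]; exact hsep.map
  have hdvd3 : fB ∣ ((Polynomial.X : kB[X]) ^ (p ^ r - 1) - 1) := by
    rw [hfB]
    have := Polynomial.map_dvd (algebraMap (ZMod p) kB) hdvd2
    rwa [Polynomial.map_sub, Polynomial.map_pow, Polynomial.map_X, Polynomial.map_one] at this
  have h45 : ((Polynomial.X : kB[X]) ^ (p ^ r - 1) - 1) ∣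
      ((Polynomial.X : kB[X]) ^ (p ^ r' - 1) - 1) := by
    obtain ⟨c, hc⟩ := hdvd
    have hnat : p ^ r - 1 ∣ p ^ r' - 1 := by
      have := Nat.sub_dvd_pow_sub_pow (p ^ r) 1 c
      rw [one_pow, ← pow_mul, ← hc] at this
      exact this
    obtain ⟨e, he⟩ := hnat
    have := sub_dvd_pow_sub_pow ((Polynomial.X : kB[X]) ^ (p ^ r - 1)) 1 e
    rw [← pow_mul, one_pow, ← he] at this
    exact this
  have hq'pos : 0 < p ^ r' := pow_pos hp.pos _
  have h56 : ((Polynomial.X : kB[X]) ^ (p ^ r' - 1) - 1) ∣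
      ((Polynomial.X : kB[X]) ^ (p ^ r') - Polynomial.X) := by
    refine ⟨Polynomial.X, ?_⟩
    rw [sub_mul, one_mul, ← pow_succ]
    congr 2
    omega
  have hXne : ((Polynomial.X : kB[X]) ^ (p ^ r') - Polynomial.X) ≠ 0 := by
    rw [← hq']
    exact FiniteField.X_pow_card_sub_X_ne_zero kB (by rw [hq']; exact Nat.one_lt_pow hr'.ne' hp.one_lt)
  have hsp : Polynomial.Splits
      ((Polynomial.X : kB[X]) ^ (p ^ r') - Polynomial.X) := by
    rw [Polynomial.splits_iff_card_roots]
    rw [← hq', FiniteField.roots_X_pow_card_sub_X,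
      FiniteField.X_pow_card_sub_X_natDegree_eq kB (by rw [hq']; exact Nat.one_lt_pow hr'.ne' hp.one_lt)]
    simp [hq']
  have hspB : Polynomial.Splits fB :=
    Polynomial.Splits.of_dvd hsp hXne (hdvd3.trans (h45.trans h56))
  have hfBne : fB ≠ 0 := (hM.map _).ne_zero
  have hfBdeg : fB.degree ≠ 0 := by
    have hnd : fB.natDegree = M.natDegree := hM.natDegree_map _
    rw [Polynomial.degree_eq_natDegree hfBne, hnd]
    simp only [ne_eq, Nat.cast_eq_zero]
    omega
  obtain ⟨x₀, hx₀⟩ := Polynomial.Splits.exists_eval_eq_zero hspB hfBdeg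
  have hx₀' : Polynomial.eval x₀ fB = 0 := by simpa using hx₀
  haveI : HenselianRing B (IsLocalRing.maximalIdeal B) := aux_henselian hn hcharB hmaxB
  obtain ⟨β, hβ, -⟩ := aux_hensel_root M hM x₀ hx₀' (aux_separable_deriv_ne hsepB hx₀')
  exact ⟨β, hβ⟩

end RootInB

/-- **Embeddings of Galois rings.** If `A = GR(p^n, r)` and `B = GR(p^n, r')` are Galois
rings, then there is an injective ring homomorphism `A → B` if and only if `r ∣ r'`. -/
theorem galois_ring_embedding_iff_dvd (p n r r' : ℕ) (hp : p.Prime) (hn : 0 < n)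
    (hr : 0 < r) (hr' : 0 < r')
    (A B : Type) [CommRing A] [Fintype A] [IsLocalRing A]
    [CommRing B] [Fintype B] [IsLocalRing B]
    (hcharA : CharP A (p ^ n)) (hcharB : CharP B (p ^ n))
    (hmaxA : IsLocalRing.maximalIdeal A = Ideal.span {(p : A)})
    (hmaxB : IsLocalRing.maximalIdeal B = Ideal.span {(p : B)})
    (hresA : Nat.card (IsLocalRing.ResidueField A) = p ^ r)
    (hresB : Nat.card (IsLocalRing.ResidueField B) = p ^ r') :
    (∃ f : A →+* B, Function.Injective f) ↔ r ∣ r' := by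
  haveI : Finite (IsLocalRing.ResidueField A) :=
    Finite.of_surjective _ (Ideal.Quotient.mk_surjective (I := IsLocalRing.maximalIdeal A))
  haveI : Finite (IsLocalRing.ResidueField B) :=
    Finite.of_surjective _ (Ideal.Quotient.mk_surjective (I := IsLocalRing.maximalIdeal B))
  constructor
  · -- forward direction
    rintro ⟨f, -⟩
    haveI : IsLocalHom f := by
      constructor
      intro a ha
      by_contra hu
      have hmem : a ∈ IsLocalRing.maximalIdeal A := hu
      rw [hmaxA, Ideal.mem_span_singleton] at hmem
      obtain ⟨c, rfl⟩ := hmem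
      have hfb : f ((p : A) * c) = (p : B) * f c := by
        rw [map_mul, map_natCast]
      rw [hfb] at ha
      have hmem' : (p : B) * f c ∈ IsLocalRing.maximalIdeal B := by
        rw [hmaxB, Ideal.mem_span_singleton]
        exact Dvd.intro _ rfl
      exact mem_nonunits_iff.mp ((IsLocalRing.mem_maximalIdeal _).mp hmem') ha
    obtain ⟨d, hd, hcard⟩ :=
      aux_finite_field_card_pow (IsLocalRing.ResidueField.map f)
    rw [hresA, hresB, ← pow_mul] at hcard
    have : r' = r * d := Nat.pow_right_injective hp.two_le hcard
    exact ⟨d, this⟩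
  · -- backward direction
    intro hdvd
    haveI := Fact.mk hp
    have hpnA : (p : A) ^ n = 0 := by
      have := CharP.cast_eq_zero A (p ^ n)
      rwa [Nat.cast_pow] at this
    haveI : CharP (IsLocalRing.ResidueField A) p := aux_charP_residue_p hp hmaxA
    letI : Algebra (ZMod p) (IsLocalRing.ResidueField A) := ZMod.algebra _ p
    -- generator of the residue field of A
    obtain ⟨x, hclosx, hmonic, hdeg, hsep, hdvdx, -⟩ := aux_field_gen hp (s := r) hresA
    -- lift the minimal polynomial to ℤ
    have hlift : minpoly (ZMod p) x ∈ Polynomial.lifts (Int.castRingHom (ZMod p)) := by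
      rw [Polynomial.mem_lifts]
      exact Polynomial.map_surjective _ ZMod.intCast_surjective _
    obtain ⟨M, hMmap, hMdeg, hMmonic⟩ :=
      Polynomial.lifts_and_degree_eq_and_monic hlift hmonic
    have hMnat : M.natDegree = r := by
      rw [Polynomial.natDegree_eq_of_degree_eq hMdeg, hdeg]
    -- Hensel lift in A
    haveI : HenselianRing A (IsLocalRing.maximalIdeal A) := aux_henselian hn hcharA hmaxA
    have hMA : M.map (Int.castRingHom (IsLocalRing.ResidueField A)) =
        (minpoly (ZMod p) x).map (algebraMap (ZMod p) (IsLocalRing.ResidueField A)) := by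
      rw [← hMmap, Polynomial.map_map]
      congr 1
      exact Subsingleton.elim _ _
    have hevalx : Polynomial.eval x
        (M.map (Int.castRingHom (IsLocalRing.ResidueField A))) = 0 := by
      rw [hMA, Polynomial.eval_map, ← Polynomial.aeval_def]
      exact minpoly.aeval _ _
    have hsepA : (M.map (Int.castRingHom (IsLocalRing.ResidueField A))).Separable := by
      rw [hMA]; exact hsep.map
    obtain ⟨α, hα, hαres⟩ :=
      aux_hensel_root M hMmonic x hevalx (aux_separable_deriv_ne hsepA hevalx)
    have hclosα : Subring.closure {α} = ⊤ :=
      aux_closure_eq_top hmaxA hpnA α (by rw [hαres]; exact hclosx)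
    -- the abstract Galois ring `Q`
    haveI : NeZero (p ^ n) := ⟨(pow_pos hp.pos n).ne'⟩
    haveI : Fact (1 < p ^ n) := ⟨Nat.one_lt_pow hn.ne' hp.one_lt⟩
    set h : Polynomial (ZMod (p ^ n)) := M.map (Int.castRingHom (ZMod (p ^ n))) with hh
    have hhmonic : h.Monic := hMmonic.map _
    set pb := AdjoinRoot.powerBasis' hhmonic with hpb
    have hdim : pb.dim = r := by
      show h.natDegree = r
      rw [hh, hMmonic.natDegree_map, hMnat]
    haveI : Finite (AdjoinRoot h) := Finite.of_equiv _ (pb.basis.equivFun).symm.toEquiv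
    have hcardQ : Nat.card (AdjoinRoot h) = p ^ (n * r) := by
      rw [Nat.card_congr (pb.basis.equivFun).toEquiv, Nat.card_fun, Nat.card_zmod,
        Nat.card_eq_fintype_card, Fintype.card_fin, hdim, ← pow_mul]
    -- the map Q → A
    have hevalA : Polynomial.eval₂ (ZMod.castHom dvd_rfl A) α h = 0 := by
      rw [hh, Polynomial.eval₂_map,
        show (ZMod.castHom dvd_rfl A).comp (Int.castRingHom (ZMod (p ^ n)))
          = Int.castRingHom A from Subsingleton.elim _ _, ← Polynomial.eval_map]
      exact hα
    set φA : AdjoinRoot h →+* A := AdjoinRoot.lift (ZMod.castHom dvd_rfl A) α hevalA with hφA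
    have hsurj : Function.Surjective φA := by
      intro a
      have hle : Subring.closure {α} ≤ φA.range :=
        Subring.closure_le.mpr (by
          simp only [Set.singleton_subset_iff]
          exact ⟨AdjoinRoot.root h, AdjoinRoot.lift_root hevalA⟩)
      exact RingHom.mem_range.mp (hle (by rw [hclosα]; trivial))
    have hcardA := aux_card_eq_pow hp hn hcharA hmaxA hresA
    have hbij : Function.Bijective φA :=
      (Nat.bijective_iff_surjective_and_card φA).mpr ⟨hsurj, by rw [hcardQ, hcardA]⟩
    set e := RingEquiv.ofBijective φA hbij with he
    -- the root in B and the map Q → B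
    obtain ⟨β, hβ⟩ := aux_exists_root_B hp hn hr hr' hdvd hcharB hmaxB hresB M hMmonic
      (by rw [hMnat]; exact hr) (by rw [hMmap]; exact hsep) (by rw [hMmap]; exact hdvdx)
    have hevalB : Polynomial.eval₂ (ZMod.castHom dvd_rfl B) β h = 0 := by
      rw [hh, Polynomial.eval₂_map,
        show (ZMod.castHom dvd_rfl B).comp (Int.castRingHom (ZMod (p ^ n)))
          = Int.castRingHom B from Subsingleton.elim _ _, ← Polynomial.eval_map]
      exact hβ
    set φB : AdjoinRoot h →+* B := AdjoinRoot.lift (ZMod.castHom dvd_rfl B) β hevalB with hφB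
    exact ⟨φB.comp (e.symm : A ≃+* AdjoinRoot h).toRingHom,
      aux_hom_injective hp hn hcharA hmaxA hcharB _⟩
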